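/- arXiv:1805.08492 — 3 statements merged into one kernel-verified Lean document; each statement's English description precedes it below -/
import Mathlib

section
/- Let d ≥ 1 and let x be a random vector in ℝ^d distributed according to the standard Gaussian measure N(0, I_d). For every nonzero vector w ∈ ℝ^d and every vector v ∈ ℝ^d, the expectation E[ 1{⟨w,x⟩ > 0} · ⟨v,x⟩ · x ] equals (1/2) v. -/
open MeasureTheory ProbabilityTheory Real
open scoped RealInnerProductSpace

/-- The standard Gaussian measure `N(0, I_d)` on `ℝ^d`, i.e. the product of `d`
standard Gaussian measures on `EuclideanSpace ℝ (Fin d)`. -/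
noncomputable def stdGaussian (d : ℕ) : Measure (EuclideanSpace ℝ (Fin d)) :=
  (Measure.pi fun _ : Fin d => gaussianReal 0 1).map
    (MeasurableEquiv.toLp 2 (Fin d → ℝ))

namespace StdGaussianAux

noncomputable def p : ℝ → ℝ := fun x => (Real.sqrt (2 * π))⁻¹ * Real.exp (-(1/2) * x ^ 2)

lemma p_nonneg (x : ℝ) : 0 ≤ p x := by
  unfold p; positivity

lemma pdf_eq_p (x : ℝ) : gaussianPDFReal 0 1 x = p x := by
  unfold p gaussianPDFReal
  rw [NNReal.coe_one, mul_one, sub_zero]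
  congr 2
  ring

lemma p_measurable : Measurable p := by
  have : p = gaussianPDFReal 0 1 := funext fun x => (pdf_eq_p x).symm
  rw [this]
  exact measurable_gaussianPDFReal 0 1

lemma integral_gaussian_eq (h : ℝ → ℝ) :
    ∫ x, h x ∂(gaussianReal 0 1) = ∫ x, p x * h x := by
  rw [gaussianReal_of_var_ne_zero 0 one_ne_zero]
  have hmeq : gaussianPDF 0 1 = fun x => (((p x).toNNReal : NNReal) : ENNReal) := by
    funext x
    rw [gaussianPDF, pdf_eq_p]
    rfl
  rw [hmeq, integral_withDensity_eq_integral_smul (p_measurable.real_toNNReal) h]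
  congr 1
  funext x
  simp [NNReal.smul_def, Real.coe_toNNReal _ (p_nonneg x)]

lemma integrable_gaussian_iff (h : ℝ → ℝ) :
    Integrable h (gaussianReal 0 1) ↔ Integrable (fun x => h x * p x) volume := by
  rw [gaussianReal_of_var_ne_zero 0 one_ne_zero]
  rw [integrable_withDensity_iff (measurable_gaussianPDF 0 1)
    (Filter.Eventually.of_forall fun x => ENNReal.ofReal_lt_top)]
  have : ∀ x : ℝ, (gaussianPDF 0 1 x).toReal = p x := by
    intro x
    rw [gaussianPDF, ENNReal.toReal_ofReal (gaussianPDFReal_nonneg 0 1 x), pdf_eq_p]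
  simp_rw [this]

lemma integrable_id_gaussian : Integrable (fun x : ℝ => x) (gaussianReal 0 1) := by
  rw [integrable_gaussian_iff]
  have := (integrable_mul_exp_neg_mul_sq (b := 1/2) (by norm_num)).const_mul
    ((Real.sqrt (2 * π))⁻¹)
  exact this.congr (Filter.Eventually.of_forall fun x => by unfold p; ring)

lemma integrable_sq_gaussian : Integrable (fun x : ℝ => x ^ 2) (gaussianReal 0 1) := by
  rw [integrable_gaussian_iff]
  have h2 : Integrable (fun x : ℝ => x ^ (2 : ℝ) * Real.exp (-(1/2) * x ^ 2)) volume :=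
    integrable_rpow_mul_exp_neg_mul_sq (b := 1/2) (by norm_num) (by norm_num)
  have := h2.const_mul ((Real.sqrt (2 * π))⁻¹)
  refine this.congr (Filter.Eventually.of_forall fun x => ?_)
  simp only [Real.rpow_two]
  unfold p; ring

lemma gaussian_map_neg : (gaussianReal 0 1).map (fun x : ℝ => -x) = gaussianReal 0 1 := by
  have := gaussianReal_map_const_mul (μ := 0) (v := 1) (-1)
  have h1 : (fun x : ℝ => -1 * x) = fun x : ℝ => -x := by funext x; ring
  rw [h1] at this
  rw [this]
  norm_num

lemma integral_id_gaussian : ∫ x, x ∂(gaussianReal 0 1) = 0 := by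
  have h1 : ∫ x, x ∂(gaussianReal 0 1) = ∫ x, -x ∂(gaussianReal 0 1) := by
    conv_lhs => rw [← gaussian_map_neg]
    rw [integral_map measurable_neg.aemeasurable]
    exact measurable_id.aestronglyMeasurable
  have h2 : ∫ x, -x ∂(gaussianReal 0 1) = -∫ x, x ∂(gaussianReal 0 1) := integral_neg _
  linarith [h1, h2]

lemma integral_sq_gaussian : ∫ x, x ^ 2 ∂(gaussianReal 0 1) = 1 := by
  rw [integral_gaussian_eq]
  have heven : ∀ x : ℝ, p x * x ^ 2
      = (fun t => t ^ 2 * Real.exp (-(1/2) * t ^ 2) * (Real.sqrt (2 * π))⁻¹) |x| := by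
    intro x
    simp only [sq_abs]
    unfold p; ring
  rw [show (fun x => p x * x ^ 2)
      = fun x => (fun t => t ^ 2 * Real.exp (-(1/2) * t ^ 2) * (Real.sqrt (2 * π))⁻¹) |x|
    from funext heven]
  rw [integral_comp_abs (f := fun t => t ^ 2 * Real.exp (-(1/2) * t ^ 2) * (Real.sqrt (2 * π))⁻¹)]
  have hup : ∀ x ∈ Set.Ioi (0:ℝ), x ^ 2 * Real.exp (-(1/2) * x ^ 2) * (Real.sqrt (2 * π))⁻¹
      = (Real.sqrt (2 * π))⁻¹ * (x ^ (2:ℝ) * Real.exp (-(1/2) * x ^ (2:ℝ))) := by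
    intro x _
    rw [Real.rpow_two]; ring
  rw [setIntegral_congr_fun measurableSet_Ioi hup, integral_const_mul]
  rw [integral_rpow_mul_exp_neg_mul_rpow (by norm_num) (by norm_num) (by norm_num)]
  have hG : Real.Gamma ((2 + 1) / 2) = Real.sqrt π / 2 := by
    have h32 : ((2 + 1) / 2 : ℝ) = 1/2 + 1 := by norm_num
    rw [h32, Real.Gamma_add_one (by norm_num), Real.Gamma_one_half_eq]
    ring
  rw [hG]
  have hpow : ((1:ℝ)/2) ^ (-(2 + 1) / 2 : ℝ) = 2 * Real.sqrt 2 := by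
    rw [one_div, Real.inv_rpow (by norm_num), ← Real.rpow_neg (by norm_num)]
    rw [show (-(-(2 + 1) / 2) : ℝ) = 1 + 1/2 by norm_num]
    rw [Real.rpow_add (by norm_num), Real.rpow_one, ← Real.sqrt_eq_rpow]
  rw [hpow]
  have hs2 : Real.sqrt (2 * π) = Real.sqrt 2 * Real.sqrt π :=
    Real.sqrt_mul (by norm_num) π
  rw [hs2]
  have h2 : Real.sqrt 2 * Real.sqrt 2 = 2 := Real.mul_self_sqrt (by norm_num)
  have hπ : Real.sqrt π ≠ 0 := by positivity
  have h2' : Real.sqrt 2 ≠ 0 := by positivity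
  field_simp

section Pi

variable {d : ℕ}

noncomputable abbrev piG (d : ℕ) : Measure (Fin d → ℝ) :=
  Measure.pi fun _ : Fin d => gaussianReal 0 1

lemma pi_integral_prod (f : Fin d → ℝ → ℝ) :
    ∫ y, ∏ i, f i (y i) ∂(piG d) = ∏ i, ∫ x, f i x ∂(gaussianReal 0 1) := by
  letI : MeasureSpace ℝ := ⟨gaussianReal 0 1⟩
  haveI : SigmaFinite (volume : Measure ℝ) :=
    inferInstanceAs (SigmaFinite (gaussianReal 0 1))
  exact MeasureTheory.integral_fintype_prod_eq_prod f

lemma pi_integrable_prod (f : Fin d → ℝ → ℝ)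
    (hf : ∀ i, Integrable (f i) (gaussianReal 0 1)) :
    Integrable (fun y => ∏ i, f i (y i)) (piG d) := by
  letI : MeasureSpace ℝ := ⟨gaussianReal 0 1⟩
  haveI : SigmaFinite (volume : Measure ℝ) :=
    inferInstanceAs (SigmaFinite (gaussianReal 0 1))
  exact MeasureTheory.Integrable.fintype_prod hf

/-- The factor functions for `y i * y j`. -/
noncomputable def F (i j : Fin d) (k : Fin d) : ℝ → ℝ :=
  fun x => (if k = i then x else 1) * (if k = j then x else 1)

lemma F_integrable (i j k : Fin d) : Integrable (F i j k) (gaussianReal 0 1) := by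
  unfold F
  rcases eq_or_ne k i with hi | hi <;> rcases eq_or_ne k j with hj | hj
  · simp only [if_pos hi, if_pos hj]
    exact integrable_sq_gaussian.congr (Filter.Eventually.of_forall fun x => pow_two x)
  · simp only [if_pos hi, if_neg hj, mul_one]
    exact integrable_id_gaussian
  · simp only [if_neg hi, if_pos hj, one_mul]
    exact integrable_id_gaussian
  · simp only [if_neg hi, if_neg hj, mul_one]
    exact integrable_const 1

lemma mul_eq_prod_F (i j : Fin d) (y : Fin d → ℝ) :
    y i * y j = ∏ k, F i j k (y k) := by
  unfold F
  rw [Finset.prod_mul_distrib]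
  congr 1 <;> simp

lemma integrable_mul_coord (i j : Fin d) :
    Integrable (fun y => y i * y j) (piG d) := by
  have := pi_integrable_prod (F i j) (F_integrable i j)
  exact this.congr (Filter.Eventually.of_forall fun y => (mul_eq_prod_F i j y).symm)

lemma integral_F (i j k : Fin d) :
    ∫ x, F i j k x ∂(gaussianReal 0 1) = if k = i then (if k = j then 1 else 0)
      else (if k = j then 0 else 1) := by
  unfold F
  rcases eq_or_ne k i with hi | hi <;> rcases eq_or_ne k j with hj | hj
  · simp only [if_pos hi, if_pos hj]
    rw [show (fun x : ℝ => x * x) = fun x : ℝ => x ^ 2 from funext fun x => (pow_two x).symm]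
    exact integral_sq_gaussian
  · simp only [if_pos hi, if_neg hj, mul_one]
    exact integral_id_gaussian
  · simp only [if_neg hi, if_pos hj, one_mul]
    exact integral_id_gaussian
  · simp only [if_neg hi, if_neg hj, mul_one]
    simp

lemma integral_mul_coord (i j : Fin d) :
    ∫ y, y i * y j ∂(piG d) = if i = j then 1 else 0 := by
  rw [show (fun y : Fin d → ℝ => y i * y j) = fun y => ∏ k, F i j k (y k)
    from funext fun y => mul_eq_prod_F i j y]
  rw [pi_integral_prod]
  by_cases h : i = j
  · subst h
    rw [if_pos rfl]
    rw [Finset.prod_eq_single i]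
    · simp [integral_F]
    · intro k _ hk; rw [integral_F]; simp [hk]
    · simp
  · rw [if_neg h]
    apply Finset.prod_eq_zero (Finset.mem_univ i)
    rw [integral_F]
    simp [Ne.symm h, h]

lemma integral_sum_mul (v' : Fin d → ℝ) (j : Fin d) :
    ∫ y, (∑ i, v' i * y i) * y j ∂(piG d) = v' j := by
  have hrw : (fun y : Fin d → ℝ => (∑ i, v' i * y i) * y j)
      = fun y => ∑ i, v' i * (y i * y j) := by
    funext y
    rw [Finset.sum_mul]
    congr 1; funext i; ring
  rw [hrw, integral_finset_sum]
  · simp_rw [integral_const_mul, integral_mul_coord]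
    simp
  · intro i _
    exact (integrable_mul_coord i j).const_mul (v' i)

lemma pi_map_neg : (piG d).map (fun y => -y) = piG d := by
  have h : ∀ _ : Fin d, MeasurePreserving (fun x : ℝ => -x)
      (gaussianReal 0 1) (gaussianReal 0 1) :=
    fun _ => ⟨measurable_neg, gaussian_map_neg⟩
  exact (measurePreserving_pi _ _ h).map_eq

lemma pi_null_hyperplane {n : ℕ} (w' : Fin (n + 1) → ℝ) (hw : ∃ i, w' i ≠ 0) :
    piG (n + 1) {y : Fin (n + 1) → ℝ | ∑ i, w' i * y i = 0} = 0 := by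
  obtain ⟨i₀, hi₀⟩ := hw
  set T := MeasurableEquiv.piFinSuccAbove (fun _ : Fin (n + 1) => ℝ) i₀ with hT
  have hTpres := measurePreserving_piFinSuccAbove (fun _ : Fin (n + 1) => gaussianReal 0 1) i₀
  set B : Set (ℝ × (Fin n → ℝ)) :=
    {p | w' i₀ * p.1 + ∑ j, w' (i₀.succAbove j) * p.2 j = 0} with hB
  have hBmeas : MeasurableSet B := by
    have : Continuous (fun p : ℝ × (Fin n → ℝ) =>
        w' i₀ * p.1 + ∑ j, w' (i₀.succAbove j) * p.2 j) := by
      apply Continuous.add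
      · exact continuous_const.mul continuous_fst
      · apply continuous_finset_sum
        intro j _
        exact continuous_const.mul ((continuous_apply j).comp continuous_snd)
    exact this.measurable (measurableSet_singleton (0:ℝ))
  have hpre : T ⁻¹' B = {y : Fin (n + 1) → ℝ | ∑ i, w' i * y i = 0} := by
    ext y
    simp only [Set.mem_preimage, hB, Set.mem_setOf_eq]
    have hTy : T y = (y i₀, fun j => y (i₀.succAbove j)) := rfl
    rw [hTy]
    rw [Fin.sum_univ_succAbove (fun i => w' i * y i) i₀]
  rw [← hpre, ← Measure.map_apply T.measurable hBmeas, hTpres.map_eq]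
  rw [Measure.prod_apply_symm hBmeas]
  have hslice : ∀ z : Fin n → ℝ,
      (gaussianReal 0 1) ((fun x => (x, z)) ⁻¹' B) = 0 := by
    intro z
    have : (fun x : ℝ => (x, z)) ⁻¹' B
        = {-(∑ j, w' (i₀.succAbove j) * z j) / w' i₀} := by
      ext a
      simp only [Set.mem_preimage, hB, Set.mem_setOf_eq, Set.mem_singleton_iff]
      rw [eq_div_iff hi₀]
      constructor
      · intro h; rw [mul_comm]; linarith
      · intro h; rw [mul_comm] at h; linarith
    rw [this]
    exact gaussianReal_absolutelyContinuous 0 one_ne_zero (measure_singleton _)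
  simp [hslice]

end Pi

end StdGaussianAux

open StdGaussianAux

section Main

variable {d : ℕ}

local notation "E" d => EuclideanSpace ℝ (Fin d)

lemma stdGaussian_eq (d : ℕ) : stdGaussian d
    = (piG d).map (MeasurableEquiv.toLp 2 (Fin d → ℝ)) := rfl

lemma inner_symm_apply (v : EuclideanSpace ℝ (Fin d)) (y : Fin d → ℝ) :
    ⟪v, (MeasurableEquiv.toLp 2 (Fin d → ℝ)) y⟫ = ∑ i, v i * y i := by
  simp [PiLp.inner_apply, RCLike.inner_apply, MeasurableEquiv.toLp]
  exact Finset.sum_congr rfl fun i _ => mul_comm _ _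

lemma symm_apply_coord (y : Fin d → ℝ) (j : Fin d) :
    ((MeasurableEquiv.toLp 2 (Fin d → ℝ)) y) j = y j := rfl

lemma integrable_normsq_stdGaussian :
    Integrable (fun y : EuclideanSpace ℝ (Fin d) => ‖y‖ ^ 2) (stdGaussian d) := by
  rw [stdGaussian_eq]
  refine ((MeasurableEquiv.measurableEmbedding
      (MeasurableEquiv.toLp 2 (Fin d → ℝ))).integrable_map_iff).mpr ?_
  have h : ∀ y : Fin d → ℝ,
      (fun y : EuclideanSpace ℝ (Fin d) => ‖y‖ ^ 2)
        ((MeasurableEquiv.toLp 2 (Fin d → ℝ)) y) = ∑ i, y i * y i := by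
    intro y
    show ‖(MeasurableEquiv.toLp 2 (Fin d → ℝ)) y‖ ^ 2 = ∑ i, y i * y i
    rw [EuclideanSpace.norm_eq]
    rw [Real.sq_sqrt (by positivity)]
    congr 1; funext i
    rw [symm_apply_coord]
    simp [sq]
  rw [show ((fun y : EuclideanSpace ℝ (Fin d) => ‖y‖ ^ 2)
      ∘ (MeasurableEquiv.toLp 2 (Fin d → ℝ))) = fun y => ∑ i, y i * y i
    from funext fun y => h y]
  exact integrable_finset_sum _ fun i _ => integrable_mul_coord i i

lemma integrable_f_stdGaussian (v : EuclideanSpace ℝ (Fin d)) :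
    Integrable (fun y : EuclideanSpace ℝ (Fin d) => ⟪v, y⟫ • y) (stdGaussian d) := by
  have hcont : Continuous (fun y : EuclideanSpace ℝ (Fin d) => ⟪v, y⟫ • y) :=
    by fun_prop
  refine Integrable.mono' (integrable_normsq_stdGaussian.const_mul ‖v‖)
    hcont.aestronglyMeasurable (Filter.Eventually.of_forall fun y => ?_)
  rw [norm_smul]
  calc ‖⟪v, y⟫‖ * ‖y‖ ≤ (‖v‖ * ‖y‖) * ‖y‖ := by
        apply mul_le_mul_of_nonneg_right _ (norm_nonneg y)
        exact (norm_inner_le_norm v y)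
    _ = ‖v‖ * ‖y‖ ^ 2 := by ring

instance : IsProbabilityMeasure (stdGaussian d) := by
  rw [stdGaussian_eq]
  exact Measure.isProbabilityMeasure_map (MeasurableEquiv.measurable _).aemeasurable

lemma stdGaussian_map_neg : (stdGaussian d).map (fun y => -y) = stdGaussian d := by
  rw [stdGaussian_eq]
  rw [Measure.map_map measurable_neg (MeasurableEquiv.measurable _)]
  have h : ((fun y : EuclideanSpace ℝ (Fin d) => -y)
        ∘ (MeasurableEquiv.toLp 2 (Fin d → ℝ)))
      = (MeasurableEquiv.toLp 2 (Fin d → ℝ)) ∘ (fun y : Fin d → ℝ => -y) := rfl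
  rw [h, ← Measure.map_map (MeasurableEquiv.measurable _) measurable_neg, pi_map_neg]

lemma stdGaussian_null_hyperplane (hd : 1 ≤ d) (w : EuclideanSpace ℝ (Fin d)) (hw : w ≠ 0) :
    stdGaussian d {y : EuclideanSpace ℝ (Fin d) | ⟪w, y⟫ = 0} = 0 := by
  obtain ⟨n, rfl⟩ : ∃ n, d = n + 1 := ⟨d - 1, (Nat.succ_pred_eq_of_pos hd).symm⟩
  have hmeas : MeasurableSet {y : EuclideanSpace ℝ (Fin (n+1)) | ⟪w, y⟫ = 0} :=
    ((continuous_const.inner continuous_id).measurable) (measurableSet_singleton (0:ℝ))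
  rw [stdGaussian_eq, MeasurableEquiv.map_apply]
  have hpre : (MeasurableEquiv.toLp 2 (Fin (n+1) → ℝ)) ⁻¹'
      {y : EuclideanSpace ℝ (Fin (n+1)) | ⟪w, y⟫ = 0}
      = {y : Fin (n+1) → ℝ | ∑ i, (w i) * y i = 0} := by
    ext y
    simp only [Set.mem_preimage, Set.mem_setOf_eq]
    rw [inner_symm_apply]
  rw [hpre]
  apply pi_null_hyperplane
  by_contra h
  push_neg at h
  apply hw
  ext i
  exact h i

lemma stdGaussian_integral_f (v : EuclideanSpace ℝ (Fin d)) :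
    ∫ y, ⟪v, y⟫ • y ∂(stdGaussian d) = v := by
  have hint := integrable_f_stdGaussian (d := d) v
  apply PiLp.ext
  intro j
  have hproj := (EuclideanSpace.proj j (𝕜 := ℝ)).integral_comp_comm hint
  have hlhs : (∫ y, ⟪v, y⟫ • y ∂(stdGaussian d)) j
      = ∫ y, ⟪v, y⟫ * y j ∂(stdGaussian d) := by
    have h0 : (∫ y, ⟪v, y⟫ • y ∂(stdGaussian d)) j
        = (EuclideanSpace.proj j (𝕜 := ℝ)) (∫ y, ⟪v, y⟫ • y ∂(stdGaussian d)) := rfl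
    rw [h0, ← hproj]
    congr 1
  rw [hlhs, stdGaussian_eq, integral_map_equiv]
  have : ∀ y : Fin d → ℝ, ⟪v, (MeasurableEquiv.toLp 2 (Fin d → ℝ)) y⟫
      * ((MeasurableEquiv.toLp 2 (Fin d → ℝ)) y) j
      = (∑ i, v i * y i) * y j := by
    intro y
    rw [inner_symm_apply, symm_apply_coord]
  simp_rw [this]
  exact integral_sum_mul (fun i => v i) j

end Main

/-- For `x ~ N(0, I_d)` and `w ≠ 0`,
`E[ 1_{⟨w,x⟩ > 0} ⟨v,x⟩ x ] = (1/2) v`. -/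
theorem stmt_0 (d : ℕ) (hd : 1 ≤ d) (w v : EuclideanSpace ℝ (Fin d)) (hw : w ≠ 0) :
    ∫ x, ({y : EuclideanSpace ℝ (Fin d) | 0 < ⟪w, y⟫}.indicator
        (fun y => ⟪v, y⟫ • y)) x ∂(stdGaussian d) = (1 / 2 : ℝ) • v := by
  set μ := stdGaussian d with hμ
  set f : EuclideanSpace ℝ (Fin d) → EuclideanSpace ℝ (Fin d) := fun y => ⟪v, y⟫ • y with hf
  set S : Set (EuclideanSpace ℝ (Fin d)) := {y | 0 < ⟪w, y⟫} with hS
  set T : Set (EuclideanSpace ℝ (Fin d)) := {y | ⟪w, y⟫ < 0} with hTdef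
  have hinner_cont : Continuous (fun y : EuclideanSpace ℝ (Fin d) => ⟪w, y⟫) :=
    continuous_const.inner continuous_id
  have hSmeas : MeasurableSet S := hinner_cont.measurable measurableSet_Ioi
  have hTmeas : MeasurableSet T := hinner_cont.measurable measurableSet_Iio
  have hint : Integrable f μ := integrable_f_stdGaussian v
  have hintS : Integrable (S.indicator f) μ := hint.indicator hSmeas
  have hintT : Integrable (T.indicator f) μ := hint.indicator hTmeas
  -- symmetry: ∫ S.indicator f = ∫ T.indicator f
  have hsym : ∫ x, S.indicator f x ∂μ = ∫ x, T.indicator f x ∂μ := by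
    conv_lhs => rw [hμ, ← stdGaussian_map_neg]
    rw [show (fun y : EuclideanSpace ℝ (Fin d) => -y)
        = ⇑(Homeomorph.neg (EuclideanSpace ℝ (Fin d))).toMeasurableEquiv from rfl]
    rw [integral_map_equiv]
    congr 1
    funext y
    show S.indicator f (-y) = T.indicator f y
    by_cases h : ⟪w, y⟫ < 0
    · have h1 : -y ∈ S := by
        simp only [hS, Set.mem_setOf_eq, inner_neg_right]
        linarith
      have h2 : y ∈ T := h
      rw [Set.indicator_of_mem h1, Set.indicator_of_mem h2]
      simp only [hf, inner_neg_right, neg_smul, smul_neg, neg_neg]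
    · have h1 : -y ∉ S := by
        simp only [hS, Set.mem_setOf_eq, inner_neg_right, not_lt]
        linarith [not_lt.mp h]
      have h2 : y ∉ T := h
      rw [Set.indicator_of_notMem h1, Set.indicator_of_notMem h2]
  -- sum: ∫ S.indicator f + ∫ T.indicator f = ∫ f
  have hnull : μ {y | ⟪w, y⟫ = 0} = 0 := stdGaussian_null_hyperplane hd w hw
  have hae : ∀ᵐ y ∂μ, ⟪w, y⟫ ≠ 0 := by
    rw [ae_iff]
    have hset : {y : EuclideanSpace ℝ (Fin d) | ¬ ⟪w, y⟫ ≠ 0} = {y | ⟪w, y⟫ = 0} := by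
      ext y; simp
    rw [hset]
    exact hnull
  have hsum : ∫ x, S.indicator f x ∂μ + ∫ x, T.indicator f x ∂μ = ∫ x, f x ∂μ := by
    rw [← integral_add hintS hintT]
    apply integral_congr_ae
    filter_upwards [hae] with y hy
    rcases lt_or_gt_of_ne hy with h | h
    · rw [Set.indicator_of_notMem (by exact not_lt.mpr h.le),
        Set.indicator_of_mem (by exact h)]
      simp
    · rw [Set.indicator_of_mem (by exact h),
        Set.indicator_of_notMem (by exact not_lt.mpr h.le)]
      simp
  have hval : ∫ x, f x ∂μ = v := stdGaussian_integral_f v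
  have h2I : (2 : ℝ) • (∫ x, S.indicator f x ∂μ) = v := by
    rw [two_smul]
    calc (∫ x, S.indicator f x ∂μ) + (∫ x, S.indicator f x ∂μ)
        = (∫ x, S.indicator f x ∂μ) + (∫ x, T.indicator f x ∂μ) := by rw [hsym]
      _ = ∫ x, f x ∂μ := hsum
      _ = v := hval
  calc ∫ x, S.indicator f x ∂μ
      = (1/2 : ℝ) • ((2 : ℝ) • (∫ x, S.indicator f x ∂μ)) := by
        rw [smul_smul]; norm_num
    _ = (1 / 2 : ℝ) • v := by rw [h2I]
end

section
/- (Lemma 2, Lyapunov descent.) Let w, w* ∈ ℝ^d be nonzero with ‖w − w*‖ < ‖w*‖, let θ = arccos(⟨w,w*⟩/(‖w‖‖w*‖)) ∈ [0,π], and define Δw = (1/2)(w* − w) + (1/(2π)) · ( ‖w*‖ (sin θ) (w/‖w‖) − θ w* ). Then for the Lyapunov function V(w) = (1/2)‖w − w*‖², its derivative along the expected dynamics satisfies V̇ = ⟨w − w*, Δw⟩ ≤ 0. -/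
open Real
open scoped RealInnerProductSpace

set_option maxHeartbeats 1000000

/-- Lemma 2 (Lyapunov descent): for nonzero `w, w*` with `‖w - w*‖ < ‖w*‖`,
the Lyapunov derivative `V̇ = ⟨w - w*, Δw⟩` along the expected dynamics
`Δw = (1/2)(w* - w) + (1/(2π))(‖w*‖ (sin θ)(w/‖w‖) - θ w*)` is nonpositive. -/
theorem stmt_10 (d : ℕ) (w wstar : EuclideanSpace ℝ (Fin d))
    (hw : w ≠ 0) (hwstar : wstar ≠ 0) (hball : ‖w - wstar‖ < ‖wstar‖)
    (θ : ℝ) (hθ : θ = Real.arccos (⟪w, wstar⟫ / (‖w‖ * ‖wstar‖)))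
    (Δw : EuclideanSpace ℝ (Fin d))
    (hΔw : Δw = (1 / 2 : ℝ) • (wstar - w)
        + (1 / (2 * π)) • ((‖wstar‖ * Real.sin θ) • (‖w‖⁻¹ • w) - θ • wstar)) :
    ⟪w - wstar, Δw⟫ ≤ 0 := by
  set a := ‖w‖ with ha_def
  set b := ‖wstar‖ with hb_def
  have ha : 0 < a := norm_pos_iff.mpr hw
  have hb : 0 < b := norm_pos_iff.mpr hwstar
  set c := (⟪w, wstar⟫ : ℝ) with hc_def
  have hcs : |c| ≤ a * b := abs_real_inner_le_norm w wstar
  have hx1 : -1 ≤ c / (a * b) := by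
    rw [le_div_iff₀ (by positivity)]
    nlinarith [abs_le.1 hcs]
  have hx2 : c / (a * b) ≤ 1 := by
    rw [div_le_iff₀ (by positivity)]
    nlinarith [abs_le.1 hcs]
  have hcos : Real.cos θ = c / (a * b) := by rw [hθ, Real.cos_arccos hx1 hx2]
  have hc_eq : c = a * b * Real.cos θ := by
    rw [hcos]; field_simp
  have hθ0 : 0 ≤ θ := hθ ▸ Real.arccos_nonneg _
  have hθπ : θ ≤ π := hθ ▸ Real.arccos_le_pi _
  have hsin0 : 0 ≤ Real.sin θ := Real.sin_nonneg_of_nonneg_of_le_pi hθ0 hθπ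
  -- from the ball condition: c > a^2/2 > 0
  have hv2 : ‖w - wstar‖ ^ 2 = a ^ 2 - 2 * c + b ^ 2 := by
    rw [norm_sub_sq_real]
  have hcpos : 0 < c := by
    have h := hball
    have : ‖w - wstar‖ ^ 2 < b ^ 2 := by
      have := norm_nonneg (w - wstar); nlinarith
    nlinarith
  have hθhalf : θ ≤ π / 2 := by
    rw [hθ]
    exact Real.arccos_le_pi_div_two.mpr (le_of_lt (by positivity))
  have hcos0 : 0 ≤ Real.cos θ := by
    rw [hcos]; positivity
  have hsinlb : 2 / π * θ ≤ Real.sin θ := Real.mul_le_sin hθ0 hθhalf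
  have hpi : 0 < π := Real.pi_pos
  -- the vector u
  set u : EuclideanSpace ℝ (Fin d) :=
    (b * Real.sin θ) • ((a : ℝ)⁻¹ • w) - θ • wstar with hu_def
  have hu2 : ‖u‖ ^ 2 = b ^ 2 * ((Real.sin θ) ^ 2 - 2 * θ * Real.sin θ * Real.cos θ + θ ^ 2) := by
    have h1 : u = (b * Real.sin θ * a⁻¹) • w - θ • wstar := by
      rw [hu_def, smul_smul]
    rw [h1, norm_sub_sq_real, norm_smul, norm_smul, real_inner_smul_left,
      real_inner_smul_right]
    rw [Real.norm_eq_abs, Real.norm_eq_abs, ← hc_def]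
    have habs1 : |b * Real.sin θ * a⁻¹| = b * Real.sin θ * a⁻¹ := by
      rw [abs_of_nonneg]; positivity
    have habs2 : |θ| = θ := abs_of_nonneg hθ0
    rw [habs1, habs2, hc_eq]
    field_simp
    ring
  have hv2' : ‖w - wstar‖ ^ 2 = a ^ 2 - 2 * (a * b * Real.cos θ) + b ^ 2 := by
    rw [hv2, hc_eq]
  have hpyth : Real.sin θ ^ 2 + Real.cos θ ^ 2 = 1 := Real.sin_sq_add_cos_sq θ
  -- key scalar inequality : ‖u‖² ≤ π² ‖v‖²
  have hkey : ‖u‖ ^ 2 ≤ π ^ 2 * ‖w - wstar‖ ^ 2 := by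
    rw [hu2, hv2']
    set s := Real.sin θ with hs_def
    have hs2 : 2 * θ ≤ π * s := by
      have h := mul_le_mul_of_nonneg_left hsinlb hpi.le
      rw [show π * (2 / π * θ) = 2 * θ by field_simp] at h
      linarith
    have h2 : θ ^ 2 ≤ π ^ 2 / 4 * s ^ 2 := by
      nlinarith [mul_le_mul hs2 hs2 (by linarith) (mul_nonneg hpi.le hsin0)]
    have h3 : 0 ≤ θ * s * Real.cos θ := mul_nonneg (mul_nonneg hθ0 hsin0) hcos0
    have hC : 1 + π ^ 2 / 4 ≤ π ^ 2 := by nlinarith [Real.pi_gt_three]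
    have hA : b ^ 2 * (s ^ 2 - 2 * θ * s * Real.cos θ + θ ^ 2)
        ≤ b ^ 2 * (s ^ 2 * π ^ 2) := by
      nlinarith [mul_nonneg (sq_nonneg b) h3, mul_le_mul_of_nonneg_left h2 (sq_nonneg b),
        mul_le_mul_of_nonneg_left (mul_le_mul_of_nonneg_left hC (sq_nonneg s)) (sq_nonneg b)]
    have h1 : b ^ 2 * s ^ 2 ≤ a ^ 2 - 2 * (a * b * Real.cos θ) + b ^ 2 := by
      nlinarith [sq_nonneg (a - b * Real.cos θ)]
    nlinarith [mul_le_mul_of_nonneg_left h1 (sq_nonneg π)]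
  have hnu : ‖u‖ ≤ π * ‖w - wstar‖ := by
    have h2 : ‖u‖ ^ 2 ≤ (π * ‖w - wstar‖) ^ 2 := hkey.trans_eq (by ring)
    exact (pow_le_pow_iff_left₀ (norm_nonneg u) (by positivity) two_ne_zero).mp h2
  -- Cauchy-Schwarz
  have hCS : ⟪w - wstar, u⟫ ≤ ‖w - wstar‖ * ‖u‖ := real_inner_le_norm _ _
  have hsplit : ⟪w - wstar, Δw⟫
      = -(1 / 2) * ‖w - wstar‖ ^ 2 + (1 / (2 * π)) * ⟪w - wstar, u⟫ := by
    rw [hΔw, inner_add_right, real_inner_smul_right, real_inner_smul_right, hu_def]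
    have : (⟪w - wstar, wstar - w⟫ : ℝ) = -‖w - wstar‖ ^ 2 := by
      rw [show wstar - w = -(w - wstar) by abel, inner_neg_right,
        real_inner_self_eq_norm_sq]
    rw [this]; ring
  rw [hsplit]
  have h2π : 0 < 1 / (2 * π) := by positivity
  have : (1 / (2 * π)) * ⟪w - wstar, u⟫ ≤ (1 / (2 * π)) * (‖w - wstar‖ * (π * ‖w - wstar‖)) := by
    apply mul_le_mul_of_nonneg_left _ h2π.le
    exact hCS.trans (mul_le_mul_of_nonneg_left hnu (norm_nonneg _))
  have heq : (1 / (2 * π)) * (‖w - wstar‖ * (π * ‖w - wstar‖)) = (1 / 2) * ‖w - wstar‖ ^ 2 := by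
    field_simp
  nlinarith [this, heq]
end

section
/- (Lemma 2, strict stability.) Let w, w* ∈ ℝ^d satisfy 0 < ‖w − w*‖ < ‖w*‖ (so w ≠ w* and, necessarily, w ≠ 0), let θ = arccos(⟨w,w*⟩/(‖w‖‖w*‖)) ∈ [0,π], and define Δw = (1/2)(w* − w) + (1/(2π)) · ( ‖w*‖ (sin θ) (w/‖w‖) − θ w* ). Then ⟨w − w*, Δw⟩ < 0. -/
set_option maxHeartbeats 1000000

open Real
open scoped RealInnerProductSpace

private lemma stab_aux (a b c θ : ℝ) (ha : 0 < a) (hb : 0 < b)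
    (hcs : |c| ≤ a * b) (hX0 : 0 < a^2 - 2*c + b^2) (hc : a^2 < 2*c)
    (hθ : θ = Real.arccos (c / (a * b))) :
    -(1/2)*(a^2 - 2*c + b^2)
      + (1/(2*π)) * (b * Real.sin θ * (a⁻¹ * (a^2 - c)) - θ * (c - b^2)) < 0 := by
  have hπ : (0:ℝ) < π := Real.pi_pos
  have hcpos : 0 < c := by nlinarith [sq_nonneg a]
  have habpos : 0 < a * b := mul_pos ha hb
  set t := c / (a * b) with ht'
  have ht1 : t ≤ 1 := by
    rw [ht', div_le_one habpos]
    exact (le_abs_self c).trans hcs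
  have htm1 : -1 ≤ t := by
    rw [ht', le_div_iff₀ habpos]
    nlinarith [neg_abs_le c]
  have htpos : 0 < t := div_pos hcpos habpos
  have hc' : c = a * b * t := by rw [ht']; field_simp
  clear_value t
  have hcost : Real.cos θ = t := by rw [hθ]; exact Real.cos_arccos htm1 ht1
  have hθ0 : 0 ≤ θ := by rw [hθ]; exact Real.arccos_nonneg _
  have hθpi : θ ≤ π := by rw [hθ]; exact Real.arccos_le_pi _
  set s := Real.sin θ with hs'
  have hs0 : 0 ≤ s := Real.sin_nonneg_of_nonneg_of_le_pi hθ0 hθpi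
  have hst : s^2 + t^2 = 1 := by rw [hs', ← hcost]; exact Real.sin_sq_add_cos_sq θ
  clear_value s
  have hθ2 : θ < π / 2 := by
    by_contra hcon
    push_neg at hcon
    have := Real.cos_nonpos_of_pi_div_two_le_of_le hcon (by linarith)
    rw [hcost] at this
    linarith
  have htan : θ * t ≤ s := by
    rcases hθ0.lt_or_eq with h | h
    · have hcospos : 0 < Real.cos θ := by rw [hcost]; exact htpos
      have h2 := Real.lt_tan h hθ2
      rw [Real.tan_eq_sin_div_cos] at h2
      rw [← hcost, hs']
      calc θ * Real.cos θ ≤ (Real.sin θ / Real.cos θ) * Real.cos θ :=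
        mul_le_mul_of_nonneg_right h2.le hcospos.le
      _ = Real.sin θ := by field_simp
    · rw [← h]; simpa using hs0
  set u := a - b * t with hu'
  clear_value u
  have hX : a^2 - 2*c + b^2 = u^2 + b^2*s^2 := by
    rw [hc', hu']; nlinarith [hst]
  have hY : b * s * (a⁻¹ * (a^2 - c)) - θ * (c - b^2)
      = b*u*(s - θ*t) + θ*(b^2*s^2) := by
    have hinv : a⁻¹ * (a^2 - a*b*t) = a - b*t := by field_simp
    rw [hc', hu', hinv]
    linear_combination (-(θ*b^2)) * hst
  have hu2 : 0 < u^2 + b^2*s^2 := by rw [← hX]; exact hX0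
  have key : b*u*(s - θ*t) + θ*(b^2*s^2) < π*(u^2 + b^2*s^2) := by
    rcases hs0.lt_or_eq with hs | hs
    · have h3 : b*u*(s - θ*t) ≤ b * |u| * s := by
        have h1 : 0 ≤ s - θ*t := by linarith
        have h2 : s - θ*t ≤ s := by nlinarith [mul_nonneg hθ0 htpos.le]
        calc b*u*(s - θ*t) ≤ |b*u*(s - θ*t)| := le_abs_self _
        _ = b * |u| * (s - θ*t) := by
            rw [abs_mul, abs_mul, abs_of_pos hb, abs_of_nonneg h1]
        _ ≤ b * |u| * s := by
            apply mul_le_mul_of_nonneg_left h2 (by positivity)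
      have h4 : θ*(b^2*s^2) < (π/2)*(b^2*s^2) := by
        apply mul_lt_mul_of_pos_right hθ2 (by positivity)
      have h5 : b * |u| * s ≤ π*u^2 + (π/2)*(b^2*s^2) := by
        nlinarith [sq_nonneg (|u| - b*s), sq_abs u, sq_nonneg u, sq_nonneg (b*s),
          Real.pi_gt_three, mul_nonneg (abs_nonneg u) (mul_nonneg hb.le hs.le)]
      linarith
    · have hs2 : s = 0 := hs.symm
      have hθt : θ * t = 0 := le_antisymm (by rw [hs2] at htan; exact htan)
        (mul_nonneg hθ0 htpos.le)
      rw [hs2, hθt]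
      rw [hs2] at hu2
      nlinarith
  have hfin : (1/(2*π)) * (b*u*(s - θ*t) + θ*(b^2*s^2))
      < (1/(2*π)) * (π*(u^2 + b^2*s^2)) :=
    mul_lt_mul_of_pos_left key (by positivity)
  have heq : (1/(2*π)) * (π*(u^2 + b^2*s^2)) = (1/2)*(u^2 + b^2*s^2) := by
    field_simp
  rw [hX, hY]
  rw [heq] at hfin
  linarith

/-- Lemma 2 (strict stability): for `w, w*` with `0 < ‖w - w*‖ < ‖w*‖`,
the Lyapunov derivative `⟨w - w*, Δw⟩` along the expected dynamics
`Δw = (1/2)(w* - w) + (1/(2π))(‖w*‖ (sin θ)(w/‖w‖) - θ w*)` is strictly negative. -/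
theorem stmt_11 (d : ℕ) (w wstar : EuclideanSpace ℝ (Fin d))
    (h0 : 0 < ‖w - wstar‖) (hball : ‖w - wstar‖ < ‖wstar‖)
    (θ : ℝ) (hθ : θ = Real.arccos (⟪w, wstar⟫ / (‖w‖ * ‖wstar‖)))
    (Δw : EuclideanSpace ℝ (Fin d))
    (hΔw : Δw = (1 / 2 : ℝ) • (wstar - w)
        + (1 / (2 * π)) • ((‖wstar‖ * Real.sin θ) • (‖w‖⁻¹ • w) - θ • wstar)) :
    ⟪w - wstar, Δw⟫ < 0 := by
  have hb : 0 < ‖wstar‖ := h0.trans hball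
  have ha : 0 < ‖w‖ := by
    rcases (norm_nonneg w).lt_or_eq with h | h
    · exact h
    · exfalso
      have hw0 : w = 0 := by rwa [eq_comm, norm_eq_zero] at h
      rw [hw0, zero_sub, norm_neg] at hball
      exact lt_irrefl _ hball
  have hcs : |⟪w, wstar⟫| ≤ ‖w‖ * ‖wstar‖ := abs_real_inner_le_norm w wstar
  have hsub : ‖w - wstar‖^2 = ‖w‖^2 - 2*⟪w, wstar⟫ + ‖wstar‖^2 := by
    rw [@norm_sub_sq_real]
  have hX0 : 0 < ‖w‖^2 - 2*⟪w, wstar⟫ + ‖wstar‖^2 := by rw [← hsub]; positivity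
  have hc : ‖w‖^2 < 2*⟪w, wstar⟫ := by
    nlinarith [hball, h0.le, norm_nonneg (w - wstar), hsub]
  have hE : ⟪w - wstar, Δw⟫ = -(1/2)*(‖w‖^2 - 2*⟪w, wstar⟫ + ‖wstar‖^2)
      + (1/(2*π)) * (‖wstar‖ * Real.sin θ * (‖w‖⁻¹ * (‖w‖^2 - ⟪w, wstar⟫))
        - θ * (⟪w, wstar⟫ - ‖wstar‖^2)) := by
    rw [hΔw]
    simp only [inner_sub_left, inner_add_right, inner_sub_right, real_inner_smul_right,
      real_inner_self_eq_norm_sq]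
    rw [real_inner_comm wstar w]
    ring
  rw [hE]
  exact stab_aux ‖w‖ ‖wstar‖ ⟪w, wstar⟫ θ ha hb hcs hX0 hc hθ
end
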